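/- Let K be a 1×2 real matrix and let P, Q be symmetric 2×2 real matrices with Q positive definite and (A₁+B₁K)ᵀP + P(A₁+B₁K) = −Q. Then there exists M > 0 such that for all T ∈ [0,1] and all z ∈ ℝ², writing A_cl(T) := I + (A₁+B₁K) T + B₂K T², one has zᵀ A_cl(T)ᵀ P A_cl(T) z − zᵀ P z ≤ −λ_min(Q) T ‖z‖² + M T² ‖z‖². -/

import Mathlib

open Matrix

def A1 : Matrix (Fin 2) (Fin 2) ℝ := !![0, 1; 0, 0]
def B1 : Matrix (Fin 2) (Fin 1) ℝ := !![0; 1]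
noncomputable def B2 : Matrix (Fin 2) (Fin 1) ℝ := !![1/2; 0]

/-- The closed-loop matrix A_cl(T) = I + (A₁+B₁K)T + B₂K T². -/
noncomputable def Acl (K : Matrix (Fin 1) (Fin 2) ℝ) (T : ℝ) : Matrix (Fin 2) (Fin 2) ℝ :=
  1 + T • (A1 + B1 * K) + T ^ 2 • (B2 * K)

lemma quad_form_eq (A P : Matrix (Fin 2) (Fin 2) ℝ) (z : Fin 2 → ℝ) :
    (A *ᵥ z) ⬝ᵥ (P *ᵥ (A *ᵥ z)) = z ⬝ᵥ ((Aᵀ * P * A) *ᵥ z) := by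
  rw [← mulVec_mulVec, dotProduct_mulVec, ← vecMul_transpose, vecMul_vecMul,
    dotProduct_mulVec]

lemma cl_expand (C D P : Matrix (Fin 2) (Fin 2) ℝ) (T : ℝ) :
    (1 + T • C + T^2 • D)ᵀ * P * (1 + T • C + T^2 • D) - P
    = T • (Cᵀ * P + P * C) + T^2 • (Dᵀ * P + P * D + Cᵀ * P * C)
      + T^3 • (Dᵀ*P*C + Cᵀ*P*D) + T^4 • (Dᵀ*P*D) := by
  simp only [transpose_add, transpose_smul, transpose_one, mul_add, add_mul, smul_add,
    mul_smul_comm, smul_mul_assoc, smul_smul, one_mul, mul_one]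
  module

lemma qf_linear (M N : Matrix (Fin 2) (Fin 2) ℝ) (z : Fin 2 → ℝ) :
    z ⬝ᵥ ((M + N) *ᵥ z) = z ⬝ᵥ (M *ᵥ z) + z ⬝ᵥ (N *ᵥ z) := by
  simp only [add_mulVec, dotProduct_add]

lemma qf_smul (t : ℝ) (M : Matrix (Fin 2) (Fin 2) ℝ) (z : Fin 2 → ℝ) :
    z ⬝ᵥ ((t • M) *ᵥ z) = t * (z ⬝ᵥ (M *ᵥ z)) := by
  simp only [smul_mulVec, dotProduct_smul, smul_eq_mul]

lemma qf_abs_bound (M : Matrix (Fin 2) (Fin 2) ℝ) (z : Fin 2 → ℝ) :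
    |z ⬝ᵥ (M *ᵥ z)| ≤ (|M 0 0| + |M 0 1| + |M 1 0| + |M 1 1|) * (z ⬝ᵥ z) := by
  have key : ∀ a x y : ℝ, |a * (x * y)| ≤ |a| * (x * x + y * y) := by
    intro a x y
    rw [abs_mul]
    have h1 : |x * y| ≤ x * x + y * y := by
      rw [abs_mul]
      nlinarith [sq_nonneg (|x| - |y|), sq_abs x, sq_abs y,
        mul_nonneg (abs_nonneg x) (abs_nonneg y)]
    exact mul_le_mul_of_nonneg_left h1 (abs_nonneg a)
  simp only [dotProduct, mulVec, Fin.sum_univ_two]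
  have e : z 0 * (M 0 0 * z 0 + M 0 1 * z 1) + z 1 * (M 1 0 * z 0 + M 1 1 * z 1)
      = M 0 0 * (z 0 * z 0) + M 0 1 * (z 0 * z 1)
        + (M 1 0 * (z 1 * z 0) + M 1 1 * (z 1 * z 1)) := by ring
  rw [e]
  have h1 := key (M 0 0) (z 0) (z 0)
  have h2 := key (M 0 1) (z 0) (z 1)
  have h3 := key (M 1 0) (z 1) (z 0)
  have h4 := key (M 1 1) (z 1) (z 1)
  have h1' : |M 0 0 * (z 0 * z 0)| ≤ |M 0 0| * (z 0 * z 0 + z 1 * z 1) := by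
    rw [abs_mul] at h1 ⊢
    have : |z 0 * z 0| ≤ z 0 * z 0 + z 1 * z 1 := by
      rw [abs_of_nonneg (mul_self_nonneg (z 0))]; nlinarith [mul_self_nonneg (z 1)]
    exact mul_le_mul_of_nonneg_left this (abs_nonneg _)
  have h4' : |M 1 1 * (z 1 * z 1)| ≤ |M 1 1| * (z 0 * z 0 + z 1 * z 1) := by
    rw [abs_mul]
    have : |z 1 * z 1| ≤ z 0 * z 0 + z 1 * z 1 := by
      rw [abs_of_nonneg (mul_self_nonneg (z 1))]; nlinarith [mul_self_nonneg (z 0)]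
    exact mul_le_mul_of_nonneg_left this (abs_nonneg _)
  have hA := abs_add_le (M 0 0 * (z 0 * z 0) + M 0 1 * (z 0 * z 1))
    (M 1 0 * (z 1 * z 0) + M 1 1 * (z 1 * z 1))
  have hB := abs_add_le (M 0 0 * (z 0 * z 0)) (M 0 1 * (z 0 * z 1))
  have hC := abs_add_le (M 1 0 * (z 1 * z 0)) (M 1 1 * (z 1 * z 1))
  nlinarith [h1', h2, h3, h4', hA, hB, hC]

lemma matSum_nonneg (M : Matrix (Fin 2) (Fin 2) ℝ) :
    0 ≤ |M 0 0| + |M 0 1| + |M 1 0| + |M 1 1| := by positivity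

theorem approximate_closed_loop_lyapunov_decrease
    (K : Matrix (Fin 1) (Fin 2) ℝ) (P Q : Matrix (Fin 2) (Fin 2) ℝ)
    (hPs : P.IsSymm) (hQs : Q.IsSymm) (hQ : Q.PosDef)
    (hLyap : (A1 + B1 * K)ᵀ * P + P * (A1 + B1 * K) = -Q)
    (lamQ : ℝ)
    (hlamQ : IsGreatest {l : ℝ | ∀ z : Fin 2 → ℝ, l * (z ⬝ᵥ z) ≤ z ⬝ᵥ (Q *ᵥ z)} lamQ) :
    ∃ M : ℝ, 0 < M ∧
      ∀ T ∈ Set.Icc (0 : ℝ) 1, ∀ z : Fin 2 → ℝ,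
        (Acl K T *ᵥ z) ⬝ᵥ (P *ᵥ (Acl K T *ᵥ z)) - z ⬝ᵥ (P *ᵥ z)
          ≤ -lamQ * T * (z ⬝ᵥ z) + M * T ^ 2 * (z ⬝ᵥ z) := by
  set C := A1 + B1 * K with hC
  set D := B2 * K with hD
  clear_value C D
  set S1 := Dᵀ * P + P * D + Cᵀ * P * C with hS1
  set S2 := Dᵀ*P*C + Cᵀ*P*D with hS2
  set S3 := Dᵀ*P*D with hS3
  obtain ⟨c1, hc1pos, hc1⟩ : ∃ c, 0 ≤ c ∧ c = |S1 0 0| + |S1 0 1| + |S1 1 0| + |S1 1 1| :=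
    ⟨_, matSum_nonneg S1, rfl⟩
  obtain ⟨c2, hc2pos, hc2⟩ : ∃ c, 0 ≤ c ∧ c = |S2 0 0| + |S2 0 1| + |S2 1 0| + |S2 1 1| :=
    ⟨_, matSum_nonneg S2, rfl⟩
  obtain ⟨c3, hc3pos, hc3⟩ : ∃ c, 0 ≤ c ∧ c = |S3 0 0| + |S3 0 1| + |S3 1 0| + |S3 1 1| :=
    ⟨_, matSum_nonneg S3, rfl⟩
  refine ⟨c1 + c2 + c3 + 1, by positivity, ?_⟩
  rintro T ⟨hT0, hT1⟩ z
  have hzz : (0:ℝ) ≤ z ⬝ᵥ z := by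
    simp only [dotProduct, Fin.sum_univ_two]
    nlinarith [mul_self_nonneg (z 0), mul_self_nonneg (z 1)]
  have hAclT : Acl K T = 1 + T • C + T^2 • D := by
    unfold Acl; rw [← hC, ← hD]
  have hexp : (Acl K T *ᵥ z) ⬝ᵥ (P *ᵥ (Acl K T *ᵥ z)) - z ⬝ᵥ (P *ᵥ z)
      = T * (z ⬝ᵥ ((-Q) *ᵥ z)) + T^2 * (z ⬝ᵥ (S1 *ᵥ z)) + T^3 * (z ⬝ᵥ (S2 *ᵥ z))
        + T^4 * (z ⬝ᵥ (S3 *ᵥ z)) := by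
    rw [quad_form_eq, hAclT]
    have h := cl_expand C D P T
    have hmv : ((1 + T • C + T^2 • D)ᵀ * P * (1 + T • C + T^2 • D)) *ᵥ z
        = ((1 + T • C + T^2 • D)ᵀ * P * (1 + T • C + T^2 • D) - P) *ᵥ z + P *ᵥ z := by
      rw [sub_mulVec, sub_add_cancel]
    rw [hmv, dotProduct_add, h, hS1, hS2, hS3, hLyap]
    rw [qf_linear, qf_linear, qf_linear, qf_smul, qf_smul, qf_smul, qf_smul]
    ring
  rw [hexp]
  have hQterm : z ⬝ᵥ ((-Q) *ᵥ z) = -(z ⬝ᵥ (Q *ᵥ z)) := by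
    rw [neg_mulVec, dotProduct_neg]
  have hlam : lamQ * (z ⬝ᵥ z) ≤ z ⬝ᵥ (Q *ᵥ z) := hlamQ.1 z
  have t1 : T * (z ⬝ᵥ ((-Q) *ᵥ z)) ≤ -lamQ * T * (z ⬝ᵥ z) := by
    rw [hQterm]
    have := mul_le_mul_of_nonneg_left hlam hT0
    nlinarith
  have b1 : z ⬝ᵥ (S1 *ᵥ z) ≤ c1 * (z ⬝ᵥ z) := by
    rw [hc1]; exact le_trans (le_abs_self _) (qf_abs_bound S1 z)
  have b2 : |z ⬝ᵥ (S2 *ᵥ z)| ≤ c2 * (z ⬝ᵥ z) := by rw [hc2]; exact qf_abs_bound S2 z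
  have b3 : |z ⬝ᵥ (S3 *ᵥ z)| ≤ c3 * (z ⬝ᵥ z) := by rw [hc3]; exact qf_abs_bound S3 z
  clear hc1 hc2 hc3 hS1 hS2 hS3 hexp hLyap hlamQ hlam hQterm
  have hT2 : (0:ℝ) ≤ T^2 := sq_nonneg T
  have hT2le : T^2 ≤ 1 := by nlinarith
  have hT3le : T^3 ≤ T^2 := by nlinarith
  have hT4le : T^4 ≤ T^2 := by nlinarith
  have t2 : T^2 * (z ⬝ᵥ (S1 *ᵥ z)) ≤ T^2 * (c1 * (z ⬝ᵥ z)) :=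
    mul_le_mul_of_nonneg_left b1 hT2
  have t3 : T^3 * (z ⬝ᵥ (S2 *ᵥ z)) ≤ T^2 * (c2 * (z ⬝ᵥ z)) := by
    have h3 : T^3 * (z ⬝ᵥ (S2 *ᵥ z)) ≤ T^3 * |z ⬝ᵥ (S2 *ᵥ z)| :=
      mul_le_mul_of_nonneg_left (le_abs_self _) (by positivity)
    have h4 : T^3 * |z ⬝ᵥ (S2 *ᵥ z)| ≤ T^2 * |z ⬝ᵥ (S2 *ᵥ z)| :=
      mul_le_mul_of_nonneg_right hT3le (abs_nonneg _)
    have h5 : T^2 * |z ⬝ᵥ (S2 *ᵥ z)| ≤ T^2 * (c2 * (z ⬝ᵥ z)) :=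
      mul_le_mul_of_nonneg_left b2 hT2
    linarith
  have t4 : T^4 * (z ⬝ᵥ (S3 *ᵥ z)) ≤ T^2 * (c3 * (z ⬝ᵥ z)) := by
    have h3 : T^4 * (z ⬝ᵥ (S3 *ᵥ z)) ≤ T^4 * |z ⬝ᵥ (S3 *ᵥ z)| :=
      mul_le_mul_of_nonneg_left (le_abs_self _) (by positivity)
    have h4 : T^4 * |z ⬝ᵥ (S3 *ᵥ z)| ≤ T^2 * |z ⬝ᵥ (S3 *ᵥ z)| :=
      mul_le_mul_of_nonneg_right hT4le (abs_nonneg _)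
    have h5 : T^2 * |z ⬝ᵥ (S3 *ᵥ z)| ≤ T^2 * (c3 * (z ⬝ᵥ z)) :=
      mul_le_mul_of_nonneg_left b3 hT2
    linarith
  have hM : T^2 * (c1 * (z ⬝ᵥ z)) + T^2 * (c2 * (z ⬝ᵥ z)) + T^2 * (c3 * (z ⬝ᵥ z))
      ≤ (c1 + c2 + c3 + 1) * T^2 * (z ⬝ᵥ z) := by nlinarith [mul_nonneg hT2 hzz]
  linarith
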